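/- Let A be a finite-dimensional unital algebra over a field F with char(F) ≠ 2 and char(F) ≠ 3. If a linear map T : A → A satisfies T(1) = 1 and T(x)³ − x³ ∈ [A,A] for every x ∈ A, then T(x²) − T(x)² ∈ rad(A) for every x ∈ A. -/

import Mathlib

open LinearMap Submodule TensorProduct


abbrev commSpan (F A : Type*) [Field F] [Ring A] [Algebra F A] : Submodule F A :=
  Submodule.span F {z : A | ∃ u v : A, z = u * v - v * u}

section Ident
variable {F A : Type*} [Field F] [Ring A] [Algebra F A]

lemma comm_mem' (u v : A) : u * v - v * u ∈ commSpan F A :=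
  Submodule.subset_span ⟨u, v, rfl⟩

lemma smul_cancel' {c : F} (hc : c ≠ 0) {w : A} (h : c • w ∈ commSpan F A) : w ∈ commSpan F A := by
  have := Submodule.smul_mem (commSpan F A) c⁻¹ h
  rwa [smul_smul, inv_mul_cancel₀ hc, one_smul] at this

variable (h2 : (2 : F) ≠ 0) (h3 : (3 : F) ≠ 0) (T : A →ₗ[F] A) (hT1 : T 1 = 1)
  (hT : ∀ x : A, T x ^ 3 - x ^ 3 ∈ commSpan F A)

include h2 h3 T hT1 hT in
lemma lemD1 : ∀ y : A, T y * T y - y * y ∈ commSpan F A := by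
  intro y
  have h6 : (6 : F) ≠ 0 := by
    have := mul_ne_zero h2 h3
    norm_num at this ⊢
    exact this
  have mem := Submodule.sub_mem (commSpan F A) (hT (y + 1)) (hT (y - 1))
  have e : (T (y+1) ^ 3 - (y+1) ^ 3) - (T (y-1) ^ 3 - (y-1) ^ 3)
      = (6 : F) • (T y * T y - y * y) := by
    rw [map_add, map_sub, hT1, Algebra.smul_def, map_ofNat]
    noncomm_ring
  rw [e] at mem
  exact smul_cancel' h6 mem

include h2 h3 T hT1 hT in
lemma lemE2 : ∀ x y : A, T x * T y - x * y ∈ commSpan F A := by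
  have D1 := lemD1 h2 h3 T hT1 hT
  intro x y
  have memD2 : T x * T y + T y * T x - (x * y + y * x) ∈ commSpan F A := by
    have mem := Submodule.sub_mem (commSpan F A) (Submodule.sub_mem (commSpan F A) (D1 (x + y)) (D1 x)) (D1 y)
    have e : (T (x+y) * T (x+y) - (x+y) * (x+y)) - (T x * T x - x * x) - (T y * T y - y * y)
        = T x * T y + T y * T x - (x * y + y * x) := by
      rw [map_add]; noncomm_ring
    rwa [e] at mem
  have mem := Submodule.add_mem (commSpan F A) (Submodule.add_mem (commSpan F A) memD2 (comm_mem' (F := F) (T x) (T y)))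
    (comm_mem' (F := F) y x)
  have e : (T x * T y + T y * T x - (x * y + y * x)) + (T x * T y - T y * T x)
      + (y * x - x * y) = (2 : F) • (T x * T y - x * y) := by
    rw [Algebra.smul_def, map_ofNat]; noncomm_ring
  rw [e] at mem
  exact smul_cancel' h2 mem

include h2 h3 T hT in
omit hT1 in
lemma lemD3 : ∀ x y : A, T y * T y * T x - y * y * x ∈ commSpan F A := by
  intro x y
  have mem1 := Submodule.sub_mem (commSpan F A) (Submodule.add_mem (commSpan F A) (hT (x + y)) (hT (x - y)))
    (Submodule.smul_mem (commSpan F A) (2 : F) (hT x))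
  have e1 : (T (x+y) ^ 3 - (x+y) ^ 3) + (T (x-y) ^ 3 - (x-y) ^ 3) - (2:F) • (T x ^ 3 - x ^ 3)
      = (2 : F) • (T x * T y * T y + T y * T x * T y + T y * T y * T x
          - (x * y * y + y * x * y + y * y * x)) := by
    rw [map_add, map_sub, Algebra.smul_def, Algebra.smul_def, map_ofNat]
    noncomm_ring
  rw [e1] at mem1
  have inner := smul_cancel' h2 mem1
  -- subtract commutators to symmetrize
  have c1 := comm_mem' (F := F) (T x * T y) (T y)
  have c2 := comm_mem' (F := F) (T y * T x) (T y)
  have d1 := comm_mem' (F := F) (x * y) y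
  have d2 := comm_mem' (F := F) (y * x) y
  have mem2 := Submodule.add_mem (commSpan F A)
    (Submodule.add_mem (commSpan F A)
      (Submodule.sub_mem (commSpan F A)
        (Submodule.sub_mem (commSpan F A) inner c1)
        (Submodule.smul_mem (commSpan F A) (2 : F) c2))
      d1)
    (Submodule.smul_mem (commSpan F A) (2 : F) d2)
  have e2 : (T x * T y * T y + T y * T x * T y + T y * T y * T x
        - (x * y * y + y * x * y + y * y * x))
      - (T x * T y * T y - T y * (T x * T y))
      - (2:F) • (T y * T x * T y - T y * (T y * T x))
      + (x * y * y - y * (x * y))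
      + (2:F) • (y * x * y - y * (y * x))
      = (3 : F) • (T y * T y * T x - y * y * x) := by
    rw [Algebra.smul_def, Algebra.smul_def, Algebra.smul_def, map_ofNat, map_ofNat]
    noncomm_ring
  rw [e2] at mem2
  exact smul_cancel' h3 mem2

end Ident



lemma exists_good_functional (K S : Type*) [Field K] [IsAlgClosed K] [Ring S] [Algebra K S]
    [FiniteDimensional K S] (J : Ideal S) (hJ : J.IsMaximal) :
    ∃ lam : S →ₗ[K] K, (∀ a b : S, lam (a * b) = lam (b * a)) ∧ (∃ s, lam s ≠ 0) ∧
      (∀ a : S, (∀ x : S, a * x ∈ J) → lam a = 0) := by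
  classical
  set V := S ⧸ J with hVdef
  haveI : SMulCommClass K S V := ⟨fun c s v => by
    rw [← algebraMap_smul S c v, ← algebraMap_smul S c (s • v), ← mul_smul, ← mul_smul,
      Algebra.commutes]⟩
  haveI : LinearMap.CompatibleSMul S V K S :=
    ⟨fun f c x => by rw [← algebraMap_smul S c x, map_smul, algebraMap_smul]⟩
  haveI : LinearMap.CompatibleSMul V V K S :=
    ⟨fun f c x => by rw [← algebraMap_smul S c x, map_smul, algebraMap_smul]⟩
  haveI : Nontrivial V := Submodule.Quotient.nontrivial_iff.mpr hJ.ne_top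
  haveI : IsSimpleModule S V := isSimpleModule_iff_isCoatom.mpr (Ideal.isMaximal_def.mp hJ)
  haveI : FiniteDimensional K V :=
    Module.Finite.of_surjective ((J.mkQ).restrictScalars K) (Submodule.Quotient.mk_surjective J)
  -- the representation
  let Φ : S →ₗ[K] Module.End K V :=
    { toFun := fun s =>
        { toFun := fun v => s • v
          map_add' := fun v w => smul_add s v w
          map_smul' := fun c v => (smul_comm c s v).symm }
      map_add' := fun s t => LinearMap.ext fun v => add_smul s t v
      map_smul' := fun c s => LinearMap.ext fun v => smul_assoc c s v }
  have Φ_apply : ∀ (s : S) (v : V), Φ s v = s • v := fun _ _ => rfl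
  -- Schur's lemma
  have schur : ∀ g : V →ₗ[S] V, ∃ c : K, ∀ v, g v = c • v := by
    intro g
    obtain ⟨c, hc⟩ := Module.End.exists_eigenvalue (g.restrictScalars K)
    obtain ⟨v, hv⟩ := hc.exists_hasEigenvector
    have hgv : g v = c • v := Module.End.mem_eigenspace_iff.mp hv.1
    let h : V →ₗ[S] V :=
      { toFun := fun w => g w - c • w
        map_add' := fun w w' => by simp only [map_add, smul_add]; abel
        map_smul' := fun s w => by
          simp only [map_smul, RingHom.id_apply, smul_sub, smul_comm c s w] }
    rcases h.injective_or_eq_zero with hinj | hzero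
    · exfalso
      have : h v = 0 := by simp only [h, LinearMap.coe_mk, AddHom.coe_mk, hgv, sub_self]
      exact hv.2 (hinj (by rw [this, map_zero]))
    · refine ⟨c, fun w => ?_⟩
      have : h w = 0 := by rw [hzero]; rfl
      simpa [h, sub_eq_zero] using this
  -- density: the representation is surjective
  have density : Function.Surjective Φ := by
    intro f
    set n := Module.finrank K V with hn
    have hnpos : 0 < n := Module.finrank_pos
    let i0 : Fin n := ⟨0, hnpos⟩
    let b := Module.finBasis K V
    let μ : S →ₗ[S] (Fin n → V) :=
      { toFun := fun s => fun i => s • b i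
        map_add' := fun s t => funext fun i => add_smul s t (b i)
        map_smul' := fun s t => funext fun i => mul_smul s t (b i) }
    haveI : IsSemisimpleModule S V := inferInstance
    haveI : IsSemisimpleModule S (Fin n → V) := by
      apply isSemisimpleModule_of_isSemisimpleModule_submodule'
        (p := fun i : Fin n => LinearMap.range (LinearMap.single S (fun _ : Fin n => V) i))
      · intro i
        exact IsSemisimpleModule.range _
      · rw [eq_top_iff]
        intro x _
        have hxs : (∑ j, Pi.single j (x j)) = x := Finset.univ_sum_single x
        rw [← hxs]
        exact Submodule.sum_mem _ fun j _ => Submodule.mem_iSup_of_mem j ⟨x j, rfl⟩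
    obtain ⟨W', hW'⟩ := exists_isCompl (LinearMap.range μ)
    let pr : (Fin n → V) →ₗ[S] (Fin n → V) :=
      (LinearMap.range μ).subtype.comp (Submodule.linearProjOfIsCompl _ W' hW')
    have pr_mem : ∀ x, pr x ∈ LinearMap.range μ := fun x => ((Submodule.linearProjOfIsCompl _ W' hW') x).2
    have pr_id : ∀ x ∈ LinearMap.range μ, pr x = x := by
      intro x hx
      show ((Submodule.linearProjOfIsCompl _ W' hW') x : Fin n → V) = x
      exact congrArg Subtype.val (Submodule.linearProjOfIsCompl_apply_left hW' ⟨x, hx⟩)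
    have entries : ∀ i j : Fin n, ∃ k : K, ∀ v : V,
        (pr (Pi.single j v)) i = k • v := by
      intro i j
      obtain ⟨c, hc⟩ := schur ((LinearMap.proj i).comp
        (pr.comp (LinearMap.single S (fun _ : Fin n => V) j)))
      exact ⟨c, fun v => hc v⟩
    choose k hk using entries
    have key : ∀ (x : Fin n → V) (i : Fin n), pr x i = ∑ j, k i j • x j := by
      intro x i
      have hxs : (∑ j, Pi.single j (x j)) = x := Finset.univ_sum_single x
      conv_lhs => rw [← hxs]
      rw [map_sum]
      rw [Finset.sum_apply]
      exact Finset.sum_congr rfl fun j _ => hk i j (x j)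
    -- apply to the element μ 1 and the candidate image
    have hμ1 : μ 1 ∈ LinearMap.range μ := ⟨1, rfl⟩
    have hFx : (fun i => f (b i)) ∈ LinearMap.range μ := by
      have h1 : (fun i => f (b i)) = fun i => f (pr (μ 1) i) := by
        rw [pr_id _ hμ1]
        funext i
        show f (b i) = f ((1 : S) • b i)
        rw [one_smul]
      have h2 : (fun i => f (pr (μ 1) i)) = pr (fun i => f ((μ 1) i)) := by
        funext i
        rw [key (μ 1) i, key (fun i => f ((μ 1) i)) i, map_sum]
        exact Finset.sum_congr rfl fun j _ => (f.map_smul (k i j) _)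
      rw [h1, h2]
      exact pr_mem _
    obtain ⟨s, hs⟩ := hFx
    refine ⟨s, ?_⟩
    apply b.ext
    intro i
    have := congrFun hs i
    simpa [μ, Φ_apply] using this
  -- a rank one endomorphism with trace 1
  have hnpos : 0 < Module.finrank K V := Module.finrank_pos
  let b := Module.finBasis K V
  let i0 : Fin (Module.finrank K V) := ⟨0, hnpos⟩
  let f0 : Module.End K V := (LinearMap.toSpanSingleton K V (b i0)).comp (b.coord i0)
  have htr : LinearMap.trace K V f0 = 1 := by
    have h1 : (b.coord i0).comp (LinearMap.toSpanSingleton K V (b i0)) = LinearMap.id := by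
      apply LinearMap.ext_ring
      simp [LinearMap.toSpanSingleton_apply]
    rw [LinearMap.trace_comp_comm', h1]
    simp [LinearMap.trace_id]
  obtain ⟨s0, hs0⟩ := density f0
  refine ⟨(LinearMap.trace K V).comp Φ, ?_, ⟨s0, ?_⟩, ?_⟩
  · intro a b'
    have hmul : ∀ x y : S, Φ (x * y) = Φ x * Φ y := by
      intro x y
      apply LinearMap.ext
      intro v
      show (x * y) • v = x • y • v
      rw [mul_smul]
    simp only [LinearMap.comp_apply, hmul]
    exact LinearMap.trace_mul_comm K (Φ a) (Φ b')
  · simp only [LinearMap.comp_apply, hs0, htr]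
    exact one_ne_zero
  · intro a ha
    have hΦ : Φ a = 0 := by
      apply LinearMap.ext
      intro v
      obtain ⟨x, rfl⟩ := Submodule.Quotient.mk_surjective J v
      show a • (Submodule.Quotient.mk x : V) = 0
      rw [← Submodule.Quotient.mk_smul, smul_eq_mul, Submodule.Quotient.mk_eq_zero]
      exact ha x
    simp [hΦ]

lemma sup_comm_ne_top (F A : Type*) [Field F] [Ring A] [Algebra F A] [FiniteDimensional F A]
    (M : TwoSidedIdeal A) (hM : M ≠ ⊤) :
    (Submodule.restrictScalars F (TwoSidedIdeal.asIdeal M) ⊔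
      Submodule.span F {z : A | ∃ u v : A, z = u * v - v * u}) ≠ ⊤ := by
  classical
  intro htop
  set K := AlgebraicClosure F
  set AK := K ⊗[F] A with hAK
  let ι : A →ₐ[F] AK := Algebra.TensorProduct.includeRight
  set I₀ : Submodule K AK := Submodule.span K (⇑ι '' (M : Set A)) with hI₀
  -- right absorption
  have absorbR : ∀ x ∈ I₀, ∀ a : AK, x * a ∈ I₀ := by
    intro x hx
    refine Submodule.span_induction ?_ ?_ ?_ ?_ hx
    · rintro y ⟨m, hm, rfl⟩ a
      induction a using TensorProduct.induction_on with
      | zero => rw [mul_zero]; exact I₀.zero_mem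
      | tmul k z =>
        have : ι m * (k ⊗ₜ[F] z) = k • (ι (m * z)) := by
          show ((1 : K) ⊗ₜ[F] m) * (k ⊗ₜ[F] z) = _
          rw [Algebra.TensorProduct.tmul_mul_tmul, one_mul]
          show k ⊗ₜ[F] (m * z) = k • ((1:K) ⊗ₜ[F] (m * z))
          rw [TensorProduct.smul_tmul', smul_eq_mul, mul_one]
        rw [this]
        exact I₀.smul_mem k (Submodule.subset_span ⟨m * z, M.mul_mem_right m z hm, rfl⟩)
      | add a b iha ihb => rw [mul_add]; exact I₀.add_mem iha ihb
    · intro a; rw [zero_mul]; exact I₀.zero_mem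
    · intro y z _ _ ihy ihz a; rw [add_mul]; exact I₀.add_mem (ihy a) (ihz a)
    · intro k y _ ihy a; rw [smul_mul_assoc]; exact I₀.smul_mem k (ihy a)
  -- left absorption
  have absorbL : ∀ x ∈ I₀, ∀ a : AK, a * x ∈ I₀ := by
    intro x hx
    refine Submodule.span_induction ?_ ?_ ?_ ?_ hx
    · rintro y ⟨m, hm, rfl⟩ a
      induction a using TensorProduct.induction_on with
      | zero => rw [zero_mul]; exact I₀.zero_mem
      | tmul k z =>
        have : (k ⊗ₜ[F] z) * ι m = k • (ι (z * m)) := by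
          show (k ⊗ₜ[F] z) * ((1 : K) ⊗ₜ[F] m) = _
          rw [Algebra.TensorProduct.tmul_mul_tmul, mul_one]
          show k ⊗ₜ[F] (z * m) = k • ((1:K) ⊗ₜ[F] (z * m))
          rw [TensorProduct.smul_tmul', smul_eq_mul, mul_one]
        rw [this]
        exact I₀.smul_mem k (Submodule.subset_span ⟨z * m, M.mul_mem_left z m hm, rfl⟩)
      | add a b iha ihb => rw [add_mul]; exact I₀.add_mem iha ihb
    · intro a; rw [mul_zero]; exact I₀.zero_mem
    · intro y z _ _ ihy ihz a; rw [mul_add]; exact I₀.add_mem (ihy a) (ihz a)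
    · intro k y _ ihy a; rw [mul_smul_comm]; exact I₀.smul_mem k (ihy a)
  -- a linear functional killing M with f 1 = 1
  have hone : (1 : A) ∉ M := fun h => hM (M.one_mem_iff.mp h)
  set Msub := Submodule.restrictScalars F (TwoSidedIdeal.asIdeal M) with hMsub
  have hmkone : (Submodule.Quotient.mk (p := Msub) (1 : A)) ≠ 0 := by
    rw [ne_eq, Submodule.Quotient.mk_eq_zero]
    intro h
    exact hone (TwoSidedIdeal.mem_asIdeal.mp h)
  obtain ⟨φ, hφ⟩ : ∃ φ : Module.Dual F (A ⧸ Msub),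
      φ (Submodule.Quotient.mk 1) ≠ 0 := by
    by_contra h
    push_neg at h
    exact hmkone ((Module.forall_dual_apply_eq_zero_iff F _).mp h)
  let f : A →ₗ[F] F := (φ (Submodule.Quotient.mk 1))⁻¹ • (φ.comp Msub.mkQ)
  have hf1 : f 1 = 1 := by
    simp only [f, LinearMap.smul_apply, LinearMap.comp_apply, Submodule.mkQ_apply, smul_eq_mul]
    exact inv_mul_cancel₀ hφ
  have hfM : ∀ m ∈ M, f m = 0 := by
    intro m hm
    have : Msub.mkQ m = 0 := by
      rw [Submodule.mkQ_apply, Submodule.Quotient.mk_eq_zero]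
      exact TwoSidedIdeal.mem_asIdeal.mpr hm
    simp [f, this]
  -- extension to AK
  let fK : AK →ₗ[K] K :=
    (Algebra.TensorProduct.rid F K K).toLinearMap.comp (LinearMap.baseChange K f)
  have hfK : ∀ (k : K) (a : A), fK (k ⊗ₜ[F] a) = f a • k := by
    intro k a
    show (Algebra.TensorProduct.rid F K K).toLinearMap ((LinearMap.baseChange K f) (k ⊗ₜ[F] a))
      = f a • k
    rw [AlgEquiv.toLinearMap_apply, LinearMap.baseChange_tmul, Algebra.TensorProduct.rid_tmul]
  have hfKI₀ : ∀ x ∈ I₀, fK x = 0 := by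
    intro x hx
    refine Submodule.span_induction ?_ (map_zero fK) ?_ ?_ hx
    · rintro y ⟨m, hm, rfl⟩
      show fK ((1:K) ⊗ₜ[F] m) = 0
      rw [hfK, hfM m hm, zero_smul]
    · intro y z _ _ hy hz; rw [map_add, hy, hz, add_zero]
    · intro k y _ hy; rw [map_smul, hy, smul_zero]
  have honeI₀ : (1 : AK) ∉ I₀ := by
    intro h
    have := hfKI₀ 1 h
    rw [Algebra.TensorProduct.one_def, hfK, hf1, one_smul] at this
    exact one_ne_zero this
  -- promote I₀ to a left ideal and find a maximal ideal above
  let Jpre : Ideal AK :=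
    { carrier := (I₀ : Set AK)
      add_mem' := fun hx hy => I₀.add_mem hx hy
      zero_mem' := I₀.zero_mem
      smul_mem' := fun c x hx => by rw [smul_eq_mul]; exact absorbL x hx c }
  have hJpre : Jpre ≠ ⊤ := fun h => honeI₀ (h ▸ Submodule.mem_top : (1:AK) ∈ Jpre)
  obtain ⟨J, hJmax, hJle⟩ := Ideal.exists_le_maximal Jpre hJpre
  obtain ⟨lam, hcyc, ⟨s0, hs0⟩, hvanish⟩ := exists_good_functional K AK J hJmax
  -- lam vanishes on ι A
  have hlamι : ∀ a : A, lam (ι a) = 0 := by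
    intro a
    have ha : a ∈ Msub ⊔ Submodule.span F {z : A | ∃ u v : A, z = u * v - v * u} :=
      htop ▸ Submodule.mem_top
    obtain ⟨m, hm, l, hl, rfl⟩ := Submodule.mem_sup.mp ha
    have h1 : lam (ι m) = 0 := by
      apply hvanish
      intro x
      exact hJle (absorbR (ι m)
        (Submodule.subset_span ⟨m, TwoSidedIdeal.mem_asIdeal.mp hm, rfl⟩) x)
    have h2 : lam (ι l) = 0 := by
      refine Submodule.span_induction ?_ ?_ ?_ ?_ hl
      · rintro z ⟨u, v, rfl⟩
        rw [map_sub, map_mul, map_mul, map_sub, hcyc]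
        exact sub_self _
      · rw [map_zero, map_zero]
      · intro y z _ _ hy hz; rw [map_add, map_add, hy, hz, add_zero]
      · intro c y _ hy
        rw [map_smul, ← algebraMap_smul K c (ι y), map_smul, hy, smul_zero]
    rw [map_add, map_add, h1, h2, add_zero]
  -- hence lam = 0, contradiction
  have : lam s0 = 0 := by
    have : ∀ s : AK, lam s = 0 := by
      intro s
      induction s using TensorProduct.induction_on with
      | zero => exact map_zero lam
      | tmul k a =>
        have : (k ⊗ₜ[F] a : AK) = k • (ι a) := by
          show _ = k • ((1:K) ⊗ₜ[F] a)
          rw [TensorProduct.smul_tmul', smul_eq_mul, mul_one]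
        rw [this, map_smul, hlamι, smul_zero]
      | add x y hx hy => rw [map_add, hx, hy, add_zero]
    exact this s0
  exact hs0 this


/-- The radical of a finite-dimensional algebra, realized as the intersection of all
maximal two-sided ideals. -/
noncomputable def ringRad (A : Type*) [Ring A] : TwoSidedIdeal A :=
  sInf {M : TwoSidedIdeal A | IsCoatom M}

/-- **Corollary 3.7 (second part).** Let `A` be a unital finite-dimensional algebra over a
field `F` with `char F ≠ 2, 3`. If a linear map `T : A → A` satisfies `T 1 = 1` and
`T x ^ 3 - x ^ 3 ∈ [A,A]` for every `x ∈ A`, then `T (x ^ 2) - T x ^ 2 ∈ rad A` for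
every `x ∈ A`. -/
theorem square_diff_mem_radical (F A : Type*) [Field F] [Ring A] [Algebra F A]
    [FiniteDimensional F A] (h2 : (2 : F) ≠ 0) (h3 : (3 : F) ≠ 0) (T : A →ₗ[F] A)
    (hT1 : T 1 = 1)
    (hT : ∀ x : A, T x ^ 3 - x ^ 3 ∈
      Submodule.span F {z : A | ∃ u v : A, z = u * v - v * u}) :
    ∀ x : A, T (x ^ 2) - T x ^ 2 ∈ ringRad A := by
  intro x
  have hT' : ∀ z : A, T z ^ 3 - z ^ 3 ∈ commSpan F A := hT
  have E2 := lemE2 h2 h3 T hT1 hT'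
  have D3 := lemD3 h2 h3 T hT'
  have hrad : ringRad A = sInf {M : TwoSidedIdeal A | IsCoatom M} := rfl
  rw [hrad, TwoSidedIdeal.mem_sInf]
  intro M hM
  replace hM : IsCoatom M := hM
  set Msub : Submodule F A := Submodule.restrictScalars F (TwoSidedIdeal.asIdeal M) with hMsubdef
  set U : Submodule F A := Msub ⊔ commSpan F A with hUdef
  have hUne : U ≠ ⊤ := sup_comm_ne_top F A M hM.1
  have hLle : commSpan F A ≤ U := le_sup_right
  have hMle : Msub ≤ U := le_sup_left
  have hMmem : ∀ {m : A}, m ∈ M → m ∈ Msub := fun hm => TwoSidedIdeal.mem_asIdeal.mpr hm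
  have hMmem' : ∀ {m : A}, m ∈ Msub → m ∈ M := fun hm => TwoSidedIdeal.mem_asIdeal.mp hm
  -- the two-sided ideal of elements killing everything into U
  let N : TwoSidedIdeal A := TwoSidedIdeal.mk' {a : A | ∀ b : A, a * b ∈ U}
    (fun b => by rw [zero_mul]; exact U.zero_mem)
    (fun {z y} hz hy b => by rw [add_mul]; exact U.add_mem (hz b) (hy b))
    (fun {z} hz b => by rw [neg_mul]; exact U.neg_mem (hz b))
    (fun {c a} ha b => by
      have e : c * a * b = (c * (a * b) - (a * b) * c) + a * (b * c) := by noncomm_ring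
      rw [e]; exact U.add_mem (hLle (comm_mem' c (a * b))) (ha (b * c)))
    (fun {a c} ha b => by rw [mul_assoc]; exact ha (c * b))
  have hmemN : ∀ a : A, a ∈ N ↔ ∀ b : A, a * b ∈ U := fun a =>
    TwoSidedIdeal.mem_mk' _ _ _ _ _ _ a
  have hMN : M ≤ N := by
    rw [TwoSidedIdeal.le_iff]
    intro a ha
    rw [SetLike.mem_coe, hmemN]
    intro b
    exact hMle (hMmem (M.mul_mem_right a b ha))
  have hNtop : N ≠ ⊤ := by
    intro h
    apply hUne
    rw [eq_top_iff]
    intro b _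
    have h1 : (1 : A) ∈ N := by rw [h]; exact TwoSidedIdeal.mem_top A
    simpa using (hmemN 1).mp h1 b
  have hNM : N = M := by
    by_contra hne
    exact hNtop (hM.2 N (lt_of_le_of_ne hMN (Ne.symm hne)))
  -- surjectivity of `mkQ ∘ T` onto `A ⧸ Msub`
  let mkU : A →ₗ[F] A ⧸ U := U.mkQ
  let φ : A →ₗ[F] (A →ₗ[F] A ⧸ U) :=
    { toFun := fun a => mkU ∘ₗ (LinearMap.mulLeft F a)
      map_add' := fun a a' => LinearMap.ext fun b => by
        simp [LinearMap.mulLeft_apply, add_mul]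
      map_smul' := fun c a => LinearMap.ext fun b => by
        simp [LinearMap.mulLeft_apply, smul_mul_assoc] }
  let Ψ : A →ₗ[F] (A →ₗ[F] A ⧸ U) :=
    { toFun := fun c => mkU ∘ₗ (LinearMap.mulLeft F c) ∘ₗ T
      map_add' := fun a a' => LinearMap.ext fun b => by
        simp [LinearMap.mulLeft_apply, add_mul]
      map_smul' := fun c a => LinearMap.ext fun b => by
        simp [LinearMap.mulLeft_apply, smul_mul_assoc] }
  have hker : Msub ≤ LinearMap.ker Ψ := by
    intro m hm
    rw [LinearMap.mem_ker]
    apply LinearMap.ext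
    intro b
    show mkU (m * T b) = 0
    rw [show mkU (m * T b) = Submodule.Quotient.mk (m * T b) from rfl,
      Submodule.Quotient.mk_eq_zero]
    exact hMle (hMmem (M.mul_mem_right _ _ (hMmem' hm)))
  let Ψbar := Msub.liftQ Ψ hker
  have hfactor : φ = Ψbar ∘ₗ (Msub.mkQ ∘ₗ T) := by
    apply LinearMap.ext
    intro a
    rw [LinearMap.comp_apply, LinearMap.comp_apply, Submodule.mkQ_apply, Submodule.liftQ_apply]
    apply LinearMap.ext
    intro b
    show mkU (a * b) = mkU (T a * T b)
    rw [show mkU (a * b) = Submodule.Quotient.mk (a * b) from rfl,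
      show mkU (T a * T b) = Submodule.Quotient.mk (T a * T b) from rfl,
      Submodule.Quotient.eq]
    have e : a * b - T a * T b = -(T a * T b - a * b) := by noncomm_ring
    rw [e]
    exact U.neg_mem (hLle (E2 a b))
  have hkerφ : LinearMap.ker φ = Msub := by
    ext a
    rw [LinearMap.mem_ker]
    constructor
    · intro h
      have haU : ∀ b, a * b ∈ U := by
        intro b
        have hb := LinearMap.congr_fun h b
        rw [LinearMap.zero_apply] at hb
        rw [show φ a b = Submodule.Quotient.mk (a * b) from rfl] at hb
        rwa [Submodule.Quotient.mk_eq_zero] at hb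
      have haN : a ∈ N := (hmemN a).mpr haU
      rw [hNM] at haN
      exact hMmem haN
    · intro ha
      apply LinearMap.ext
      intro b
      rw [show φ a b = Submodule.Quotient.mk (a * b) from rfl, LinearMap.zero_apply,
        Submodule.Quotient.mk_eq_zero]
      exact hMle (hMmem (M.mul_mem_right _ _ (hMmem' ha)))
  have hrk1 : Module.finrank F (LinearMap.range φ) = Module.finrank F (A ⧸ Msub) := by
    have ha := LinearMap.finrank_range_add_finrank_ker φ
    have hb := Submodule.finrank_quotient_add_finrank Msub
    rw [hkerφ] at ha
    omega
  have hrk2 : Module.finrank F (LinearMap.range φ)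
      ≤ Module.finrank F (LinearMap.range (Msub.mkQ ∘ₗ T)) := by
    rw [hfactor, LinearMap.range_comp]
    exact Submodule.finrank_map_le _ _
  have hrangetop : LinearMap.range (Msub.mkQ ∘ₗ T) = ⊤ := by
    apply Submodule.eq_top_of_finrank_eq
    refine le_antisymm (Submodule.finrank_le _) ?_
    rw [← hrk1]
    exact hrk2
  have hsurj : ∀ b : A, ∃ a : A, b - T a ∈ Msub := by
    intro b
    have hmem : (Submodule.Quotient.mk b : A ⧸ Msub) ∈ LinearMap.range (Msub.mkQ ∘ₗ T) := by
      rw [hrangetop]; exact Submodule.mem_top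
    obtain ⟨a, ha⟩ := hmem
    refine ⟨a, ?_⟩
    rw [LinearMap.comp_apply, Submodule.mkQ_apply] at ha
    exact (Submodule.Quotient.eq Msub).mp ha.symm
  -- the key element
  have hgU : ∀ b : A, (T (x * x) - T x * T x) * b ∈ U := by
    intro b
    obtain ⟨a, ha⟩ := hsurj b
    have hdec : (T (x * x) - T x * T x) * b
        = (T (x * x) - T x * T x) * T a + (T (x * x) - T x * T x) * (b - T a) := by
      noncomm_ring
    rw [hdec]
    apply U.add_mem
    · have e2 : T (x * x) * T a - (x * x) * a ∈ commSpan F A := E2 (x * x) a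
      have d3 : T x * T x * T a - x * x * a ∈ commSpan F A := D3 a x
      have e : (T (x * x) - T x * T x) * T a
          = (T (x * x) * T a - (x * x) * a) - (T x * T x * T a - x * x * a) := by noncomm_ring
      rw [e]
      exact hLle (Submodule.sub_mem _ e2 d3)
    · exact hMle (hMmem (M.mul_mem_left _ _ (hMmem' ha)))
  have hgN : T (x * x) - T x * T x ∈ N := (hmemN _).mpr hgU
  rw [hNM] at hgN
  have hx2 : T (x ^ 2) - T x ^ 2 = T (x * x) - T x * T x := by rw [sq, sq]
  rw [hx2]
  exact hgN
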